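/- arXiv:1809.04205 — 2 statements merged into one kernel-verified Lean document; each statement's English description precedes it below -/
import Mathlib

section
/- Let X be a doodle switch with operation · and derived operation • defined by S⁻¹(x,y) = (y•x, x•y). Then the binary operation •⁻¹ defined by x •⁻¹ y = x·(y ·⁻¹ x) satisfies (x•y)•⁻¹y = x and (x•⁻¹y)•y = x for all x,y ∈ X, and it is the unique binary operation with these properties. -/
/-- A doodle switch: a set with a binary operation satisfying the axioms
corresponding to the R1 and R2 moves. -/
structure DoodleSwitch (X : Type*) where
  op : X → X → X
  comm_iff : ∀ a b : X, op a b = op b a ↔ a = b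
  existsUnique_left : ∀ a b : X, ∃! u : X, a = op u b
  S_bij : Function.Bijective (fun p : X × X => (op p.2 p.1, op p.1 p.2))

/-- The map `S(a,b) = (b·a, a·b)`. -/
def DoodleSwitch.S {X : Type*} (D : DoodleSwitch X) : X × X → X × X :=
  fun p => (D.op p.2 p.1, D.op p.1 p.2)

theorem stmt3 {X : Type*} (D : DoodleSwitch X)
    (inv : X → X → X)
    (hinv : ∀ x y : X, inv (D.op x y) y = x ∧ D.op (inv x y) y = x)
    (bullet : X → X → X)
    (hb : ∀ x y : X, D.S (bullet y x, bullet x y) = (x, y)) :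
    (∀ x y : X, (fun x y => D.op x (inv y x)) (bullet x y) y = x ∧
        bullet ((fun x y => D.op x (inv y x)) x y) y = x) ∧
    (∀ f : X → X → X,
        (∀ x y : X, f (bullet x y) y = x ∧ bullet (f x y) y = x) →
        f = fun x y => D.op x (inv y x)) := by
  have Sinj : Function.Injective D.S := D.S_bij.1
  have hb1 : ∀ x y : X, D.op (bullet x y) (bullet y x) = x := fun x y =>
    congrArg Prod.fst (hb x y)
  have hb2 : ∀ x y : X, D.op (bullet y x) (bullet x y) = y := fun x y =>
    congrArg Prod.snd (hb x y)
  have inv_eq : ∀ x y : X, inv y (bullet x y) = bullet y x := by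
    intro x y
    have h := (hinv (bullet y x) (bullet x y)).1
    rwa [hb2] at h
  have part1a : ∀ x y : X, D.op (bullet x y) (inv y (bullet x y)) = x := by
    intro x y
    rw [inv_eq, hb1]
  have part1b : ∀ x y : X, bullet (D.op x (inv y x)) y = x := by
    intro x y
    set z := D.op x (inv y x) with hz
    have h1 : D.S (inv y x, x) = (z, y) := by
      simp only [DoodleSwitch.S, ← hz, (hinv y x).2, Prod.mk.injEq]
    have h2 : D.S (bullet y z, bullet z y) = (z, y) := hb z y
    have := Sinj (h2.trans h1.symm)
    exact congrArg Prod.snd this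
  refine ⟨fun x y => ⟨part1a x y, part1b x y⟩, ?_⟩
  intro f hf
  funext x y
  have h := hf x y
  have := part1a (f x y) y
  rw [h.2] at this
  exact this.symm
end

section
/- Let X be a doodle switch with derived operation • (defined by S⁻¹(x,y) = (y•x, x•y)). Then (X, •) is itself a doodle switch: a•b = b•a iff a = b; for each a,b ∈ X there is a unique u with a = u•b; and the map S'(a,b) = (b•a, a•b) is a bijection of X² (indeed S' = τ∘S⁻¹∘τ where τ is the transposition). -/
theorem stmt14 {X : Type*} (D : DoodleSwitch X)
    (bullet : X → X → X)
    (hb : ∀ x y : X, D.S (bullet y x, bullet x y) = (x, y)) :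
    (∀ a b : X, bullet a b = bullet b a ↔ a = b) ∧
    (∀ a b : X, ∃! u : X, a = bullet u b) ∧
    Function.Bijective (fun p : X × X => (bullet p.2 p.1, bullet p.1 p.2)) := by
  set T : X × X → X × X := fun p => (bullet p.2 p.1, bullet p.1 p.2) with hT
  have hST : ∀ p : X × X, D.S (T p) = p := by
    intro ⟨x, y⟩; exact hb x y
  have hTS : ∀ p : X × X, T (D.S p) = p := by
    intro p
    exact D.S_bij.injective (hST (D.S p))
  refine ⟨?_, ?_, ?_⟩
  · intro a b
    constructor
    · intro h
      have h1 : T (a, b) = (bullet a b, bullet a b) := by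
        simp [hT, h]
      have h2 : D.S (bullet a b, bullet a b) = (a, b) := by
        rw [← h1]; exact hST (a, b)
      have : D.op (bullet a b) (bullet a b) = a ∧ D.op (bullet a b) (bullet a b) = b := by
        constructor
        · exact congrArg Prod.fst h2
        · exact congrArg Prod.snd h2
      exact this.1.symm.trans this.2
    · intro h; rw [h]
  · intro a b
    obtain ⟨v, hv, hvu⟩ := D.existsUnique_left b a
    refine ⟨D.op a v, ?_, ?_⟩
    · have := hTS (v, a)
      have hS : D.S (v, a) = (D.op a v, D.op v a) := rfl
      rw [hS, ← hv] at this
      exact (congrArg Prod.snd this).symm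
    · intro u' hu'
      have h1 : T (u', b) = (bullet b u', a) := by simp [hT, hu']
      have h2 : D.S (bullet b u', a) = (u', b) := by rw [← h1]; exact hST (u', b)
      have hb2 : b = D.op (bullet b u') a := (congrArg Prod.snd h2).symm
      have hveq : bullet b u' = v := hvu _ hb2
      have hu : u' = D.op a (bullet b u') := (congrArg Prod.fst h2).symm
      rw [hu, hveq]
  · constructor
    · intro p q h
      have : D.S (T p) = D.S (T q) := congrArg D.S h
      rwa [hST, hST] at this
    · intro p
      exact ⟨D.S p, hTS p⟩
end
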